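/- arXiv:1606.06256 — 7 statements merged into one kernel-verified Lean document; each statement's English description precedes it below -/
import Mathlib

section
/- Let x⋆ be a critical point with criticality threshold Γ(x⋆). If Γ(x⋆) < γ_g, then x⋆ is Γ(x⋆)-critical. -/
open Set Filter Topology

/-- The majorizing model `ℓ_γ(z; x) = f(x) + ⟨∇f(x), z−x⟩ + ‖z−x‖²/(2γ) + g(z)`. -/
noncomputable def linQ {n : ℕ} (f : EuclideanSpace ℝ (Fin n) → ℝ)
    (f' : EuclideanSpace ℝ (Fin n) → EuclideanSpace ℝ (Fin n))
    (g : EuclideanSpace ℝ (Fin n) → EReal) (γ : ℝ)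
    (x z : EuclideanSpace ℝ (Fin n)) : EReal :=
  ((f x + (inner ℝ (f' x) (z - x) : ℝ) + ‖z - x‖ ^ 2 / (2 * γ) : ℝ) : EReal) + g z

/-- The forward-backward operator `T_γ(x)`: the set of minimizers of `z ↦ ℓ_γ(z; x)`. -/
noncomputable def Tset {n : ℕ} (f : EuclideanSpace ℝ (Fin n) → ℝ)
    (f' : EuclideanSpace ℝ (Fin n) → EuclideanSpace ℝ (Fin n))
    (g : EuclideanSpace ℝ (Fin n) → EReal) (γ : ℝ)
    (x : EuclideanSpace ℝ (Fin n)) : Set (EuclideanSpace ℝ (Fin n)) :=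
  {z | ∀ w, linQ f f' g γ x z ≤ linQ f f' g γ x w}

/-- The forward-backward envelope `φ_γ(x) = inf_z ℓ_γ(z; x)`. -/
noncomputable def fbe {n : ℕ} (f : EuclideanSpace ℝ (Fin n) → ℝ)
    (f' : EuclideanSpace ℝ (Fin n) → EuclideanSpace ℝ (Fin n))
    (g : EuclideanSpace ℝ (Fin n) → EReal) (γ : ℝ)
    (x : EuclideanSpace ℝ (Fin n)) : EReal :=
  ⨅ z, linQ f f' g γ x z

/-- `g + ‖·‖²/(2γ)` is bounded below by a real constant. -/
def ProxBddBelow {n : ℕ} (g : EuclideanSpace ℝ (Fin n) → EReal) (γ : ℝ) : Prop :=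
  ∃ c : ℝ, ∀ z, (c : EReal) ≤ g z + ((‖z‖ ^ 2 / (2 * γ) : ℝ) : EReal)

/-- `g` is proper: not identically `⊤`, and never `⊥`. -/
def ProperFn {n : ℕ} (g : EuclideanSpace ℝ (Fin n) → EReal) : Prop :=
  (∃ x, g x ≠ ⊤) ∧ ∀ x, g x ≠ ⊥

/-- The criticality threshold `Γ(x) = sup({γ > 0 : x ∈ T_γ(x)} ∪ {0})`. -/
noncomputable def critThresh {n : ℕ} (f : EuclideanSpace ℝ (Fin n) → ℝ)
    (f' : EuclideanSpace ℝ (Fin n) → EuclideanSpace ℝ (Fin n))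
    (g : EuclideanSpace ℝ (Fin n) → EReal)
    (x : EuclideanSpace ℝ (Fin n)) : ℝ :=
  sSup ({γ : ℝ | 0 < γ ∧ x ∈ Tset f f' g γ x} ∪ {0})

theorem stmt6 {n : ℕ} (f : EuclideanSpace ℝ (Fin n) → ℝ)
    (f' : EuclideanSpace ℝ (Fin n) → EuclideanSpace ℝ (Fin n))
    (hgrad : ∀ x, HasGradientAt f (f' x) x)
    (Lf : ℝ) (hlip : LipschitzWith (Real.toNNReal Lf) f')
    (g : EuclideanSpace ℝ (Fin n) → EReal)
    (hproper : ProperFn g) (hlsc : LowerSemicontinuous g)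
    (γg : ℝ)
    (hpb : ∀ γ' ∈ Set.Ioo (0 : ℝ) γg, ProxBddBelow g γ')
    (hpb' : ∀ γ' : ℝ, γg < γ' → ¬ ProxBddBelow g γ')
    (xs : EuclideanSpace ℝ (Fin n))
    (hcrit : ∃ γ ∈ Set.Ioo (0 : ℝ) γg, xs ∈ Tset f f' g γ xs)
    (hΓ : critThresh f f' g xs < γg) :
    xs ∈ Tset f f' g (critThresh f f' g xs) xs := by
  classical
  obtain ⟨γ₀, ⟨hγ₀pos, hγ₀lt⟩, hT₀⟩ := hcrit
  set v : EuclideanSpace ℝ (Fin n) := f' xs with hv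
  obtain ⟨w₀, hw₀⟩ := hproper.1
  have hgxs_ne_bot := hproper.2 xs
  have hlinself : ∀ γ : ℝ, linQ f f' g γ xs xs = ((f xs : ℝ) : EReal) + g xs := by
    intro γ; simp [linQ]
  have hgxs_ne_top : g xs ≠ ⊤ := by
    intro htop
    have h1 := hT₀ w₀
    rw [hlinself, htop, EReal.coe_add_top] at h1
    have h2 : linQ f f' g γ₀ xs w₀ < ⊤ := by
      simp only [linQ]
      exact EReal.add_lt_top (EReal.coe_ne_top _) hw₀
    exact (lt_irrefl _ (lt_of_le_of_lt h1 h2))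
  obtain ⟨b, hb⟩ : ∃ b : ℝ, g xs = (b : EReal) :=
    ⟨(g xs).toReal, (EReal.coe_toReal hgxs_ne_top hgxs_ne_bot).symm⟩
  -- key real inequality from membership
  have key : ∀ γ : ℝ, xs ∈ Tset f f' g γ xs →
      ∀ z : EuclideanSpace ℝ (Fin n), ∀ gz : ℝ, g z = (gz : EReal) →
      b ≤ (inner ℝ v (z - xs) : ℝ) + ‖z - xs‖ ^ 2 / (2 * γ) + gz := by
    intro γ hT z gz hgz
    have h1 := hT z
    rw [hlinself γ, hb] at h1
    simp only [linQ, hgz, ← EReal.coe_add, EReal.coe_le_coe_iff] at h1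
    linarith
  have hγgpos : 0 < γg := lt_trans hγ₀pos hγ₀lt
  -- quadratic lower bound helper
  have quad : ∀ δ U t : ℝ, 0 < δ → 0 ≤ U → -(U ^ 2 / (4 * δ)) ≤ δ * t ^ 2 - U * t := by
    intro δ U t hδ hU
    rw [neg_le, le_div_iff₀ (by positivity : (0:ℝ) < 4 * δ)]
    nlinarith [sq_nonneg (2 * δ * t - U)]
  -- boundedness of the good set
  have hbound : ∀ γ' : ℝ, 0 < γ' → xs ∈ Tset f f' g γ' xs → γ' ≤ γg := by
    intro γ' hγ'pos hT'
    by_contra hgt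
    push_neg at hgt
    set γ'' := (γg + γ') / 2 with hγ''
    have h1 : γg < γ'' := by rw [hγ'']; linarith
    have h2 : γ'' < γ' := by rw [hγ'']; linarith
    have h3 : 0 < γ'' := lt_trans hγgpos h1
    apply hpb' γ'' h1
    set u : EuclideanSpace ℝ (Fin n) := v - (1 / γ') • xs with hu
    set δ : ℝ := (γ' - γ'') / (2 * γ'' * γ') with hδdef
    have hδpos : 0 < δ := by
      apply div_pos (by linarith) (by positivity)
    refine ⟨b + (inner ℝ v xs : ℝ) - ‖xs‖ ^ 2 / (2 * γ') - ‖u‖ ^ 2 / (4 * δ), fun z => ?_⟩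
    by_cases hzt : g z = ⊤
    · rw [hzt, EReal.top_add_coe]; exact le_top
    · obtain ⟨gz, hgz⟩ : ∃ gz : ℝ, g z = (gz : EReal) :=
        ⟨(g z).toReal, (EReal.coe_toReal hzt (hproper.2 z)).symm⟩
      rw [hgz, ← EReal.coe_add, EReal.coe_le_coe_iff]
      have h1' := key γ' hT' z gz hgz
      have hexp : ‖z - xs‖ ^ 2 = ‖z‖ ^ 2 - 2 * (inner ℝ z xs : ℝ) + ‖xs‖ ^ 2 :=
        norm_sub_sq_real z xs
      have hinn : (inner ℝ v (z - xs) : ℝ) = (inner ℝ v z : ℝ) - (inner ℝ v xs : ℝ) :=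
        inner_sub_right v z xs
      have hudot : (inner ℝ u z : ℝ) = (inner ℝ v z : ℝ) - (inner ℝ z xs : ℝ) / γ' := by
        rw [hu, inner_sub_left, real_inner_smul_left, real_inner_comm xs z]
        ring
      have hcs : (inner ℝ u z : ℝ) ≤ ‖u‖ * ‖z‖ := real_inner_le_norm u z
      have hq := quad δ ‖u‖ ‖z‖ hδpos (norm_nonneg u)
      have hsplit : (‖z‖ ^ 2 - 2 * (inner ℝ z xs : ℝ) + ‖xs‖ ^ 2) / (2 * γ')
          = ‖z‖ ^ 2 / (2 * γ') - (inner ℝ z xs : ℝ) / γ' + ‖xs‖ ^ 2 / (2 * γ') := by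
        field_simp
      have hδid : ‖z‖ ^ 2 / (2 * γ'') - ‖z‖ ^ 2 / (2 * γ') = δ * ‖z‖ ^ 2 := by
        rw [hδdef]
        field_simp
      rw [hexp, hinn, hsplit] at h1'
      linarith
  -- properties of the sup
  have hne : ({γ : ℝ | 0 < γ ∧ xs ∈ Tset f f' g γ xs} ∪ {0}).Nonempty :=
    ⟨0, Or.inr rfl⟩
  have hbdd : BddAbove ({γ : ℝ | 0 < γ ∧ xs ∈ Tset f f' g γ xs} ∪ {0}) := by
    refine ⟨γg, ?_⟩
    rintro γ (⟨hγpos, hTγ⟩ | h0)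
    · exact hbound γ hγpos hTγ
    · rw [Set.mem_singleton_iff] at h0; rw [h0]; exact le_of_lt hγgpos
  set Γ : ℝ := critThresh f f' g xs with hΓdef
  have hΓge : γ₀ ≤ Γ := le_csSup hbdd (Or.inl ⟨hγ₀pos, hT₀⟩)
  have hΓpos : 0 < Γ := lt_of_lt_of_le hγ₀pos hΓge
  -- main goal
  show ∀ w, linQ f f' g Γ xs xs ≤ linQ f f' g Γ xs w
  intro w
  rw [hlinself Γ, hb, ← EReal.coe_add]
  by_cases hwt : g w = ⊤
  · simp only [linQ, hwt, EReal.coe_add_top]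
    exact le_top
  · obtain ⟨gw, hgw⟩ : ∃ gw : ℝ, g w = (gw : EReal) :=
      ⟨(g w).toReal, (EReal.coe_toReal hwt (hproper.2 w)).symm⟩
    simp only [linQ, hgw, ← EReal.coe_add, EReal.coe_le_coe_iff]
    have hgoal : b ≤ (inner ℝ v (w - xs) : ℝ) + ‖w - xs‖ ^ 2 / (2 * Γ) + gw := by
      set a : ℝ := b - (inner ℝ v (w - xs) : ℝ) - gw with ha
      set cc : ℝ := ‖w - xs‖ ^ 2 with hcc
      have hccnn : 0 ≤ cc := by rw [hcc]; positivity
      rcases le_or_gt a 0 with hle | hpos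
      · have : 0 ≤ cc / (2 * Γ) := by positivity
        rw [ha] at hle; linarith
      · have hsup : Γ ≤ cc / (2 * a) := by
          apply csSup_le hne
          rintro γ (⟨hγpos, hTγ⟩ | h0)
          · have h1' := key γ hTγ w gw hgw
            have h2' : a ≤ cc / (2 * γ) := by rw [ha, hcc]; linarith
            have h3' : a * (2 * γ) ≤ cc := (le_div_iff₀ (by positivity)).mp h2'
            rw [le_div_iff₀ (by positivity : (0:ℝ) < 2 * a)]
            nlinarith
          · rw [Set.mem_singleton_iff] at h0; rw [h0]; positivity
        have h4' : Γ * (2 * a) ≤ cc := (le_div_iff₀ (by positivity)).mp hsup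
        have h5' : a ≤ cc / (2 * Γ) := by
          rw [le_div_iff₀ (by positivity : (0:ℝ) < 2 * Γ)]
          nlinarith
        rw [ha, hcc] at h5'
        linarith
    linarith
end

section
/- If x⋆ is a critical point and γ ∈ (0, Γ(x⋆)), then T_γ(x⋆) = {x⋆}; that is, the forward-backward operator is single-valued at x⋆ with x⋆ as its only element. -/
open Set Filter Topology

lemma linQ_self {n : ℕ} (f : EuclideanSpace ℝ (Fin n) → ℝ)
    (f' : EuclideanSpace ℝ (Fin n) → EuclideanSpace ℝ (Fin n))
    (g : EuclideanSpace ℝ (Fin n) → EReal) (γ : ℝ) (x : EuclideanSpace ℝ (Fin n)) :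
    linQ f f' g γ x x = ((f x : ℝ) : EReal) + g x := by
  unfold linQ
  simp

theorem stmt7' {n : ℕ} (f : EuclideanSpace ℝ (Fin n) → ℝ)
    (f' : EuclideanSpace ℝ (Fin n) → EuclideanSpace ℝ (Fin n))
    (g : EuclideanSpace ℝ (Fin n) → EReal)
    (hproper : ProperFn g)
    (xs : EuclideanSpace ℝ (Fin n))
    (γ : ℝ) (hγ : γ ∈ Set.Ioo (0 : ℝ) (critThresh f f' g xs)) :
    Tset f f' g γ xs = {xs} := by
  obtain ⟨hγ0, hγΓ⟩ := hγ
  set S := ({γ : ℝ | 0 < γ ∧ xs ∈ Tset f f' g γ xs} ∪ {0} : Set ℝ) with hS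
  have hne : S.Nonempty := ⟨0, Or.inr rfl⟩
  obtain ⟨γ', hγ'S, hγγ'⟩ := exists_lt_of_lt_csSup hne hγΓ
  have hγ'pos : 0 < γ' := hγ0.trans hγγ'
  have hxs' : xs ∈ Tset f f' g γ' xs := by
    rcases hγ'S with h | h
    · exact h.2
    · exact absurd h (by simpa using hγ'pos.ne')
  have hgbot := hproper.2
  have hgtop : g xs ≠ ⊤ := by
    intro htop
    obtain ⟨w, hw⟩ := hproper.1
    have h1 := hxs' w
    rw [linQ_self, htop] at h1
    have h2 : linQ f f' g γ' xs w = ⊤ := top_le_iff.mp (by simpa using h1)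
    obtain ⟨W, hW⟩ : ∃ W : ℝ, g w = (W : EReal) :=
      ⟨(g w).toReal, (EReal.coe_toReal hw (hproper.2 w)).symm⟩
    rw [linQ, hW, ← EReal.coe_add] at h2
    exact EReal.coe_ne_top _ h2
  obtain ⟨G, hG⟩ : ∃ G : ℝ, g xs = (G : EReal) :=
    ⟨(g xs).toReal, (EReal.coe_toReal hgtop (hgbot xs)).symm⟩
  have hmono : ∀ z, linQ f f' g γ' xs z ≤ linQ f f' g γ xs z := by
    intro z
    unfold linQ
    refine add_le_add_left (EReal.coe_le_coe_iff.mpr ?_) _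
    have : ‖z - xs‖ ^ 2 / (2 * γ') ≤ ‖z - xs‖ ^ 2 / (2 * γ) := by
      apply div_le_div_of_nonneg_left (by positivity) (by linarith) (by linarith)
    linarith
  have hself : linQ f f' g γ xs xs = ((f xs + G : ℝ) : EReal) := by
    rw [linQ_self, hG, ← EReal.coe_add]
  have hself' : linQ f f' g γ' xs xs = ((f xs + G : ℝ) : EReal) := by
    rw [linQ_self, hG, ← EReal.coe_add]
  have hxsin : xs ∈ Tset f f' g γ xs := by
    intro w
    calc linQ f f' g γ xs xs = linQ f f' g γ' xs xs := by rw [hself, hself']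
    _ ≤ linQ f f' g γ' xs w := hxs' w
    _ ≤ linQ f f' g γ xs w := hmono w
  ext z
  simp only [Set.mem_singleton_iff]
  constructor
  · intro hz
    have h1 : linQ f f' g γ xs z ≤ ((f xs + G : ℝ) : EReal) := hself ▸ hz xs
    have h2 : ((f xs + G : ℝ) : EReal) ≤ linQ f f' g γ' xs z := hself' ▸ hxs' z
    have heq1 : linQ f f' g γ xs z = ((f xs + G : ℝ) : EReal) :=
      le_antisymm h1 (h2.trans (hmono z))
    have heq2 : linQ f f' g γ' xs z = ((f xs + G : ℝ) : EReal) :=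
      le_antisymm ((hmono z).trans_eq heq1) h2
    have hgz : ∃ H : ℝ, g z = (H : EReal) := by
      refine ⟨(g z).toReal, (EReal.coe_toReal ?_ (hgbot z)).symm⟩
      intro htop
      rw [linQ, htop, EReal.add_top_of_ne_bot (EReal.coe_ne_bot _)] at heq1
      exact EReal.coe_ne_top _ heq1.symm
    obtain ⟨H, hH⟩ := hgz
    rw [linQ, hH, ← EReal.coe_add, EReal.coe_eq_coe_iff] at heq1 heq2
    have hnorm : ‖z - xs‖ ^ 2 / (2 * γ) = ‖z - xs‖ ^ 2 / (2 * γ') := by linarith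
    have hN : ‖z - xs‖ ^ 2 = 0 := by
      by_contra hNne
      have hNpos : 0 < ‖z - xs‖ ^ 2 := lt_of_le_of_ne (by positivity) (Ne.symm hNne)
      have : ‖z - xs‖ ^ 2 / (2 * γ') < ‖z - xs‖ ^ 2 / (2 * γ) := by
        apply div_lt_div_of_pos_left hNpos (by linarith) (by linarith)
      linarith
    have : z - xs = 0 := by
      have := pow_eq_zero_iff (n := 2) (by norm_num) |>.mp hN
      exact norm_eq_zero.mp this
    exact sub_eq_zero.mp this
  · rintro rfl
    exact hxsin
theorem stmt7 {n : ℕ} (f : EuclideanSpace ℝ (Fin n) → ℝ)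
    (f' : EuclideanSpace ℝ (Fin n) → EuclideanSpace ℝ (Fin n))
    (hgrad : ∀ x, HasGradientAt f (f' x) x)
    (Lf : ℝ) (hlip : LipschitzWith (Real.toNNReal Lf) f')
    (g : EuclideanSpace ℝ (Fin n) → EReal)
    (hproper : ProperFn g) (hlsc : LowerSemicontinuous g)
    (γg : ℝ)
    (hpb : ∀ γ' ∈ Set.Ioo (0 : ℝ) γg, ProxBddBelow g γ')
    (hpb' : ∀ γ' : ℝ, γg < γ' → ¬ ProxBddBelow g γ')
    (xs : EuclideanSpace ℝ (Fin n))
    (hcrit : ∃ γ' ∈ Set.Ioo (0 : ℝ) γg, xs ∈ Tset f f' g γ' xs)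
    (γ : ℝ) (hγ : γ ∈ Set.Ioo (0 : ℝ) (critThresh f f' g xs)) :
    Tset f f' g γ xs = {xs} := by
  exact stmt7' f f' g hproper xs γ hγ
end

section
/- If x⋆ is γ-critical with respect to the decomposition φ = f + g and h ∈ C^{1,1}(ℝⁿ) with L_h-Lipschitz gradient, then x⋆ is γ̃-critical with respect to the decomposition φ = (f − h) + (g + h), where γ̃ = γ/(1 + γ L_h). -/
open Set Filter Topology

lemma descent_lemma {n : ℕ} (h : EuclideanSpace ℝ (Fin n) → ℝ)
    (h' : EuclideanSpace ℝ (Fin n) → EuclideanSpace ℝ (Fin n))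
    (hgradh : ∀ x, HasGradientAt h (h' x) x)
    (Lh : ℝ) (hLh : 0 ≤ Lh) (hliph : LipschitzWith (Real.toNNReal Lh) h')
    (x y : EuclideanSpace ℝ (Fin n)) :
    h x + inner ℝ (h' x) (y - x) - Lh / 2 * ‖y - x‖ ^ 2 ≤ h y := by
  set d := y - x with hd
  have key : ∀ t : ℝ, HasDerivAt (fun t : ℝ => h (x + t • d))
      ((inner ℝ (h' (x + t • d)) d : ℝ)) t := by
    intro t
    have hc : HasDerivAt (fun t : ℝ => x + t • d) d t := by
      simpa using ((hasDerivAt_id t).smul_const d).const_add x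
    have := (hgradh (x + t • d)).hasFDerivAt.comp_hasDerivAt t hc
    simpa [Function.comp_def, InnerProductSpace.toDual_apply_apply] using this
  have hcont : Continuous fun t : ℝ => (inner ℝ (h' (x + t • d)) d : ℝ) := by
    apply Continuous.inner
    · exact hliph.continuous.comp (by continuity)
    · exact continuous_const
  have hint : IntervalIntegrable (fun t : ℝ => (inner ℝ (h' (x + t • d)) d : ℝ))
      MeasureTheory.volume 0 1 := hcont.intervalIntegrable 0 1
  have hFTC : ∫ t in (0:ℝ)..1, (inner ℝ (h' (x + t • d)) d : ℝ)
      = h y - h x := by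
    have := intervalIntegral.integral_eq_sub_of_hasDerivAt
      (fun t _ => key t) hint
    simpa [hd] using this
  have hmono : ∫ t in (0:ℝ)..1, ((inner ℝ (h' x) d : ℝ) - Lh * ‖d‖ ^ 2 * t)
      ≤ ∫ t in (0:ℝ)..1, (inner ℝ (h' (x + t • d)) d : ℝ) := by
    apply intervalIntegral.integral_mono_on (by norm_num)
    · exact (Continuous.intervalIntegrable (by continuity) 0 1)
    · exact hint
    · intro t ht
      have ht0 : 0 ≤ t := ht.1
      have hlip' : ‖h' (x + t • d) - h' x‖ ≤ Lh * (t * ‖d‖) := by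
        have := hliph.dist_le_mul (x + t • d) x
        simp only [dist_eq_norm] at this
        calc ‖h' (x + t • d) - h' x‖ ≤ Lh.toNNReal * ‖x + t • d - x‖ := this
          _ ≤ Lh * (t * ‖d‖) := by
              rw [Real.coe_toNNReal _ hLh]
              have : ‖x + t • d - x‖ = t * ‖d‖ := by
                simp [norm_smul, abs_of_nonneg ht0]
              rw [this]
      have hinner : (inner ℝ (h' (x + t • d)) d : ℝ) - (inner ℝ (h' x) d : ℝ)
          ≥ -(Lh * (t * ‖d‖) * ‖d‖) := by
        have h1 : (inner ℝ (h' (x + t • d) - h' x) d : ℝ)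
            ≥ -(‖h' (x + t • d) - h' x‖ * ‖d‖) := by
          have := abs_real_inner_le_norm (h' (x + t • d) - h' x) d
          nlinarith [neg_abs_le (inner ℝ (h' (x + t • d) - h' x) d : ℝ)]
        rw [inner_sub_left] at h1
        nlinarith [mul_le_mul_of_nonneg_right hlip' (norm_nonneg d)]
      nlinarith
  have hleft : ∫ t in (0:ℝ)..1, ((inner ℝ (h' x) d : ℝ) - Lh * ‖d‖ ^ 2 * t)
      = (inner ℝ (h' x) d : ℝ) - Lh / 2 * ‖d‖ ^ 2 := by
    rw [intervalIntegral.integral_sub (intervalIntegrable_const)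
      (by apply Continuous.intervalIntegrable; exact continuous_const.mul continuous_id)]
    rw [intervalIntegral.integral_const_mul]
    simp
    ring
  rw [hleft, hFTC] at hmono
  linarith

theorem stmt10 {n : ℕ} (f h : EuclideanSpace ℝ (Fin n) → ℝ)
    (f' h' : EuclideanSpace ℝ (Fin n) → EuclideanSpace ℝ (Fin n))
    (hgradf : ∀ x, HasGradientAt f (f' x) x)
    (hgradh : ∀ x, HasGradientAt h (h' x) x)
    (Lh : ℝ) (hLh : 0 ≤ Lh) (hliph : LipschitzWith (Real.toNNReal Lh) h')
    (g : EuclideanSpace ℝ (Fin n) → EReal)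
    (hproper : ProperFn g)
    (γ : ℝ) (hγ : 0 < γ)
    (xs : EuclideanSpace ℝ (Fin n)) (hxs : xs ∈ Tset f f' g γ xs) :
    xs ∈ Tset (fun y => f y - h y) (fun y => f' y - h' y)
        (fun z => g z + ((h z : ℝ) : EReal)) (γ / (1 + γ * Lh)) xs := by
  intro w
  have hx := hxs w
  have hγt : 0 < 1 + γ * Lh := by positivity
  simp only [linQ, sub_self, inner_zero_right, norm_zero, add_zero] at hx ⊢
  norm_num at hx ⊢
  set B := f xs + inner ℝ (f' xs) (w - xs) + ‖w - xs‖ ^ 2 / (2 * γ) with hBdef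
  set D := f xs - h xs + (inner ℝ (f' xs - h' xs) (w - xs) : ℝ)
      + ‖w - xs‖ ^ 2 / (2 * (γ / (1 + γ * Lh))) with hDdef
  have hB : B ≤ D + h w := by
    have hdesc := descent_lemma h h' hgradh Lh hLh hliph xs w
    have hnorm : ‖w - xs‖ ^ 2 / (2 * (γ / (1 + γ * Lh)))
        = ‖w - xs‖ ^ 2 / (2 * γ) + Lh / 2 * ‖w - xs‖ ^ 2 := by
      field_simp
    rw [hDdef, hBdef, inner_sub_left, hnorm]
    linarith
  calc ((f xs - h xs : ℝ) : EReal) + (g xs + ((h xs : ℝ) : EReal))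
      = ((f xs : ℝ) : EReal) + g xs := by
        rw [add_comm (g xs), ← add_assoc, ← EReal.coe_add, sub_add_cancel]
    _ ≤ (B : EReal) + g w := hx
    _ ≤ ((D + h w : ℝ) : EReal) + g w := by
        exact add_le_add_left (EReal.coe_le_coe_iff.2 hB) (g w)
    _ = (D : EReal) + (g w + ((h w : ℝ) : EReal)) := by
        rw [EReal.coe_add, add_assoc, add_comm ((h w : ℝ) : EReal) (g w)]
end

section
/- For every γ ∈ (0, γ_g), every x ∈ ℝⁿ and every x̄ ∈ T_γ(x), it holds that φ(x̄) ≤ φ_γ(x) − ((1 − γ L_f)/(2γ))‖x − x̄‖², where φ = f + g. -/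
open Set Filter Topology

open Set

variable {E : Type*} [NormedAddCommGroup E] [InnerProductSpace ℝ E] [CompleteSpace E]

lemma descent_lemma_s13 (f : E → ℝ) (f' : E → E)
    (hgrad : ∀ x, HasGradientAt f (f' x) x)
    (L : NNReal) (hlip : LipschitzWith L f') (x y : E) :
    f y ≤ f x + inner ℝ (f' x) (y - x) + (L : ℝ) / 2 * ‖y - x‖ ^ 2 := by
  set v := y - x with hv
  have hcont : Continuous f' := hlip.continuous
  have hderiv : ∀ t : ℝ, HasDerivAt (fun t : ℝ => f (x + t • v))
      (inner ℝ (f' (x + t • v)) v : ℝ) t := by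
    intro t
    have h1 : HasFDerivAt f ((InnerProductSpace.toDual ℝ E) (f' (x + t • v))) (x + t • v) :=
      (hgrad (x + t • v))
    have h2 : HasDerivAt (fun t : ℝ => x + t • v) v t := by
      simpa using ((hasDerivAt_id t).smul_const v).const_add x
    have h3 := h1.comp_hasDerivAt t h2
    simp at h3
    exact h3
  have hcont2 : Continuous fun t : ℝ => (inner ℝ (f' (x + t • v)) v : ℝ) := by
    exact (hcont.comp (by continuity)).inner continuous_const
  have hint : f y - f x = ∫ t in (0:ℝ)..1, (inner ℝ (f' (x + t • v)) v : ℝ) := by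
    have := intervalIntegral.integral_eq_sub_of_hasDerivAt
      (f := fun t : ℝ => f (x + t • v))
      (fun t _ => hderiv t) (hcont2.intervalIntegrable 0 1)
    simp only [zero_smul, add_zero, one_smul, hv] at this
    rw [this]
    congr 1
    abel_nf
  have hbound : ∀ t ∈ Set.Icc (0:ℝ) 1,
      (inner ℝ (f' (x + t • v)) v : ℝ) ≤ inner ℝ (f' x) v + (L : ℝ) * t * ‖v‖ ^ 2 := by
    intro t ht
    have h3 : (inner ℝ (f' (x + t • v)) v : ℝ) - inner ℝ (f' x) v
        = inner ℝ (f' (x + t • v) - f' x) v := by rw [inner_sub_left]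
    have h4 : (inner ℝ (f' (x + t • v) - f' x) v : ℝ) ≤ ‖f' (x + t • v) - f' x‖ * ‖v‖ :=
      real_inner_le_norm _ _
    have h5 : ‖f' (x + t • v) - f' x‖ ≤ (L : ℝ) * (t * ‖v‖) := by
      have := hlip.dist_le_mul (x + t • v) x
      rw [dist_eq_norm] at this
      simpa [norm_smul, abs_of_nonneg ht.1] using this
    nlinarith [norm_nonneg v, norm_nonneg (f' (x + t • v) - f' x), ht.1,
      mul_le_mul_of_nonneg_right h5 (norm_nonneg v)]
  have hintle : (∫ t in (0:ℝ)..1, (inner ℝ (f' (x + t • v)) v : ℝ))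
      ≤ ∫ t in (0:ℝ)..1, (inner ℝ (f' x) v + (L : ℝ) * t * ‖v‖ ^ 2) := by
    apply intervalIntegral.integral_mono_on (by norm_num)
      (hcont2.intervalIntegrable 0 1)
      ((by continuity : Continuous fun t : ℝ => (inner ℝ (f' x) v : ℝ) + (L:ℝ) * t * ‖v‖^2).intervalIntegrable 0 1)
    exact hbound
  have hval : (∫ t in (0:ℝ)..1, ((inner ℝ (f' x) v : ℝ) + (L : ℝ) * t * ‖v‖ ^ 2))
      = inner ℝ (f' x) v + (L : ℝ) / 2 * ‖v‖ ^ 2 := by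
    have h1 : IntervalIntegrable (fun _ : ℝ => (inner ℝ (f' x) v : ℝ)) MeasureTheory.volume 0 1 :=
      intervalIntegrable_const
    have h2 : IntervalIntegrable (fun t : ℝ => (L : ℝ) * t * ‖v‖ ^ 2) MeasureTheory.volume 0 1 :=
      (Continuous.intervalIntegrable (by continuity) 0 1)
    rw [intervalIntegral.integral_add h1 h2]
    have : (∫ t in (0:ℝ)..1, (L : ℝ) * t * ‖v‖ ^ 2)
        = (L : ℝ) * ‖v‖ ^ 2 * ∫ t in (0:ℝ)..1, t := by
      rw [← intervalIntegral.integral_const_mul]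
      congr 1; ext t; ring
    rw [this, integral_id]
    simp
    ring
  linarith [hint, hintle, hval.le]

theorem stmt13 {n : ℕ} (f : EuclideanSpace ℝ (Fin n) → ℝ)
    (f' : EuclideanSpace ℝ (Fin n) → EuclideanSpace ℝ (Fin n))
    (hgrad : ∀ x, HasGradientAt f (f' x) x)
    (Lf : ℝ) (hLf : 0 ≤ Lf) (hlip : LipschitzWith (Real.toNNReal Lf) f')
    (g : EuclideanSpace ℝ (Fin n) → EReal)
    (hproper : ProperFn g) (hlsc : LowerSemicontinuous g)
    (γg : ℝ) (hpb : ∀ γ' ∈ Set.Ioo (0 : ℝ) γg, ProxBddBelow g γ')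
    (γ : ℝ) (hγ : γ ∈ Set.Ioo (0 : ℝ) γg)
    (x xb : EuclideanSpace ℝ (Fin n)) (hxb : xb ∈ Tset f f' g γ x) :
    ((f xb : ℝ) : EReal) + g xb ≤
      fbe f f' g γ x - (((1 - γ * Lf) / (2 * γ) * ‖x - xb‖ ^ 2 : ℝ) : EReal) := by
  obtain ⟨hγ0, hγg⟩ := hγ
  set c : ℝ := (1 - γ * Lf) / (2 * γ) * ‖x - xb‖ ^ 2 with hc
  set A : ℝ := f x + (inner ℝ (f' x) (xb - x) : ℝ) + ‖xb - x‖ ^ 2 / (2 * γ) with hA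
  have hreal : f xb + c ≤ A := by
    have hd := descent_lemma_s13 f f' hgrad (Real.toNNReal Lf) hlip x xb
    have hcoe : ((Real.toNNReal Lf : NNReal) : ℝ) = Lf := Real.coe_toNNReal _ hLf
    rw [hcoe] at hd
    have hnorm : ‖x - xb‖ = ‖xb - x‖ := by rw [← neg_sub, norm_neg]
    rw [hc, hA, hnorm]
    have key : (1 - γ*Lf)/(2*γ)*‖xb-x‖^2 = ‖xb-x‖^2/(2*γ) - Lf*‖xb-x‖^2/2 := by
      field_simp
    rw [key]
    linarith
  have hfbe : ((A : ℝ) : EReal) + g xb ≤ fbe f f' g γ x := le_iInf hxb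
  have hmain : ((f xb : ℝ) : EReal) + g xb ≤ (((A : ℝ) : EReal) + g xb) - (c : EReal) := by
    cases h : g xb with
    | bot => exact absurd h (hproper.2 xb)
    | top =>
      simp [EReal.coe_add_top, EReal.top_sub_coe]
    | coe r =>
      rw [← EReal.coe_add, ← EReal.coe_add, ← EReal.coe_sub, EReal.coe_le_coe_iff]
      linarith
  calc ((f xb : ℝ) : EReal) + g xb ≤ (((A : ℝ) : EReal) + g xb) - (c : EReal) := hmain
    _ ≤ fbe f f' g γ x - (c : EReal) := by
        rw [sub_eq_add_neg, sub_eq_add_neg]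
        exact add_le_add_left hfbe _
end

section
/- For any γ ∈ (0, γ_g), the forward-backward envelope φ_γ is a real-valued, locally Lipschitz (strictly continuous) function on ℝⁿ. -/
open Set Filter Topology

private lemma aux_quad (α B M s : ℝ) (hα : 0 < α) (hM : 0 ≤ M) (hB : 0 ≤ B) (hs : 0 ≤ s)
    (h : α*s^2 - B*s ≤ M) : s ≤ max 1 ((M+B)/α) := by
  rcases le_or_gt s 1 with h1 | h1
  · exact le_trans h1 (le_max_left _ _)
  · refine le_trans ?_ (le_max_right _ _)
    rw [le_div_iff₀ hα]
    nlinarith [mul_nonneg hM (sub_nonneg.2 h1.le), mul_nonneg (mul_nonneg hα.le hs) (sub_nonneg.2 h1.le)]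

set_option maxHeartbeats 2000000 in
theorem stmt16' {n : ℕ} (f : EuclideanSpace ℝ (Fin n) → ℝ)
    (f' : EuclideanSpace ℝ (Fin n) → EuclideanSpace ℝ (Fin n))
    (hgrad : ∀ x, HasGradientAt f (f' x) x)
    (Lf : ℝ) (hlip : LipschitzWith (Real.toNNReal Lf) f')
    (g : EuclideanSpace ℝ (Fin n) → EReal)
    (hproper : ProperFn g) (hlsc : LowerSemicontinuous g)
    (γg : ℝ) (hpb : ∀ γ' ∈ Set.Ioo (0 : ℝ) γg, ProxBddBelow g γ')
    (γ : ℝ) (hγ : γ ∈ Set.Ioo (0 : ℝ) γg) :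
    ∃ F : EuclideanSpace ℝ (Fin n) → ℝ,
      (∀ x, fbe f f' g γ x = ((F x : ℝ) : EReal)) ∧ LocallyLipschitz F := by
  obtain ⟨hγ0, hγg⟩ := hγ
  obtain ⟨⟨z₀, hz₀⟩, hgbot⟩ := hproper
  set r₀ : ℝ := (g z₀).toReal with hr₀def
  have hgz₀ : g z₀ = (r₀ : EReal) := (EReal.coe_toReal hz₀ (hgbot z₀)).symm
  clear_value r₀
  set γ' : ℝ := (γ + γg)/2 with hγ'def
  clear_value γ'
  have hγ'1 : γ < γ' := by rw [hγ'def]; linarith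
  have hγ'2 : γ' < γg := by rw [hγ'def]; linarith
  have hγ'0 : 0 < γ' := lt_trans hγ0 hγ'1
  obtain ⟨c, hc⟩ := hpb γ' ⟨hγ'0, hγ'2⟩
  have hcR : ∀ z, ∀ r : ℝ, g z = (r : EReal) → c ≤ r + ‖z‖^2/(2*γ') := by
    intro z r h
    have h2 := hc z
    rw [h, ← EReal.coe_add] at h2
    exact_mod_cast h2
  set α : ℝ := 1/(2*γ) - 1/(2*γ') with hαdef
  clear_value α
  have hα : 0 < α := by
    have h1 : 1/(2*γ') < 1/(2*γ) :=
      one_div_lt_one_div_of_lt (by linarith) (by linarith)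
    rw [hαdef]; linarith
  set Q : EuclideanSpace ℝ (Fin n) → EuclideanSpace ℝ (Fin n) → ℝ :=
    fun x z => f x + (inner ℝ (f' x) (z - x) : ℝ) + ‖z - x‖ ^ 2 / (2 * γ) with hQdef
  have hlinQ : ∀ x z, linQ f f' g γ x z = ((Q x z : ℝ) : EReal) + g z := fun _ _ => rfl
  clear_value Q
  -- pointwise lower bound
  set lb : EuclideanSpace ℝ (Fin n) → ℝ :=
    fun x => f x + c - ‖x‖^2/(2*γ') - (‖f' x‖ + ‖x‖/γ')^2/(4*α) with hlbdef
  clear_value lb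
  have key_lb : ∀ x z, ∀ r : ℝ, g z = (r : EReal) → lb x ≤ Q x z + r := by
    intro x z r h
    have hcz := hcR z r h
    have hin : -(‖f' x‖ * ‖z - x‖) ≤ (inner ℝ (f' x) (z - x) : ℝ) := by
      have h1 := abs_real_inner_le_norm (f' x) (z - x)
      have h2 := neg_abs_le (inner ℝ (f' x) (z - x) : ℝ)
      linarith
    have hzn : ‖z‖ ≤ ‖z - x‖ + ‖x‖ := by
      have := norm_add_le (z - x) x
      simpa using this
    have hz2 : ‖z‖^2/(2*γ') ≤ (‖z - x‖ + ‖x‖)^2/(2*γ') := by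
      gcongr
    have h4α : (0:ℝ) < 4*α := by linarith
    have hq1 : (‖f' x‖ + ‖x‖/γ')*‖z - x‖ - α*‖z - x‖^2 ≤ (‖f' x‖ + ‖x‖/γ')^2/(4*α) := by
      rw [le_div_iff₀ h4α]
      nlinarith [sq_nonneg (2*α*‖z - x‖ - (‖f' x‖ + ‖x‖/γ'))]
    have hid : ‖z - x‖^2/(2*γ) = α*‖z - x‖^2 + ‖z - x‖^2/(2*γ') := by
      rw [hαdef]; field_simp; ring
    have hid2 : (‖z - x‖ + ‖x‖)^2/(2*γ') = ‖z - x‖^2/(2*γ') + (‖x‖/γ')*‖z - x‖ + ‖x‖^2/(2*γ') := by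
      field_simp; ring
    simp only [hlbdef, hQdef]
    have hdist : (‖f' x‖ + ‖x‖/γ')*‖z - x‖ = ‖f' x‖*‖z - x‖ + (‖x‖/γ')*‖z - x‖ := by ring
    linarith [hcz, hin, hz2, hq1, hid, hid2, hdist]
  have hlb_fbe : ∀ x, ((lb x : ℝ) : EReal) ≤ fbe f f' g γ x := by
    intro x
    refine le_iInf fun z => ?_
    rw [hlinQ]
    by_cases htop : g z = ⊤
    · rw [htop]
      exact le_top.trans_eq rfl
    · have hgz : g z = (((g z).toReal : ℝ) : EReal) := (EReal.coe_toReal htop (hgbot z)).symm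
      have h := key_lb x z (g z).toReal hgz
      calc ((lb x : ℝ) : EReal) ≤ ((Q x z + (g z).toReal : ℝ) : EReal) := EReal.coe_le_coe_iff.mpr h
        _ = ((Q x z : ℝ) : EReal) + (((g z).toReal : ℝ) : EReal) := EReal.coe_add _ _
        _ = ((Q x z : ℝ) : EReal) + g z := by rw [← hgz]
  have hfbe_ne_bot : ∀ x, fbe f f' g γ x ≠ ⊥ :=
    fun x => ne_of_gt (lt_of_lt_of_le (EReal.bot_lt_coe _) (hlb_fbe x))
  have hfbe_le : ∀ x z, fbe f f' g γ x ≤ linQ f f' g γ x z := fun x z => iInf_le _ z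
  have hfbe_ne_top : ∀ x, fbe f f' g γ x ≠ ⊤ := by
    intro x
    have h1 : linQ f f' g γ x z₀ = ((Q x z₀ + r₀ : ℝ) : EReal) := by
      rw [hlinQ, hgz₀, ← EReal.coe_add]
    exact ne_top_of_le_ne_top (h1 ▸ EReal.coe_ne_top _) (hfbe_le x z₀)
  set F : EuclideanSpace ℝ (Fin n) → ℝ := fun x => (fbe f f' g γ x).toReal with hFdef
  have hFeq : ∀ x, fbe f f' g γ x = ((F x : ℝ) : EReal) :=
    fun x => (EReal.coe_toReal (hfbe_ne_top x) (hfbe_ne_bot x)).symm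
  clear_value F
  refine ⟨F, hFeq, ?_⟩
  have hFub : ∀ x z, ∀ r : ℝ, g z = (r : EReal) → F x ≤ Q x z + r := by
    intro x z r h
    have h2 := hfbe_le x z
    rw [hFeq x, hlinQ, h, ← EReal.coe_add] at h2
    exact_mod_cast h2
  have hnear : ∀ x, ∀ ε : ℝ, 0 < ε → ∃ z, ∃ r : ℝ, g z = (r : EReal) ∧ Q x z + r < F x + ε := by
    intro x ε hε
    have hlt : (⨅ z, linQ f f' g γ x z) < ((F x + ε : ℝ) : EReal) := by
      have : fbe f f' g γ x < ((F x + ε : ℝ) : EReal) := by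
        rw [hFeq x]
        exact_mod_cast (by linarith : F x < F x + ε)
      exact this
    obtain ⟨z, hz⟩ := iInf_lt_iff.mp hlt
    have htop : g z ≠ ⊤ := by
      intro h
      rw [hlinQ, h] at hz
      have he : ((Q x z : ℝ) : EReal) + ⊤ = ⊤ := rfl
      rw [he] at hz
      exact absurd hz (by simp)
    have hgz : g z = (((g z).toReal : ℝ) : EReal) := (EReal.coe_toReal htop (hgbot z)).symm
    refine ⟨z, (g z).toReal, hgz, ?_⟩
    rw [hlinQ, hgz, ← EReal.coe_add] at hz
    exact_mod_cast hz
  -- Locally Lipschitz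
  intro x₀
  set ℓ : ℝ := (Real.toNNReal Lf : ℝ) with hℓdef
  clear_value ℓ
  have hℓ0 : 0 ≤ ℓ := by rw [hℓdef]; exact NNReal.coe_nonneg _
  set R : ℝ := ‖x₀‖ + 1 with hRdef
  clear_value R
  have hR0 : 0 ≤ R := by rw [hRdef]; positivity
  have hR : ∀ x ∈ Metric.closedBall x₀ 1, ‖x‖ ≤ R := by
    intro x hx
    have h1 : ‖x - x₀‖ ≤ 1 := by rwa [Metric.mem_closedBall, dist_eq_norm] at hx
    have h2 : ‖x‖ ≤ ‖x - x₀‖ + ‖x₀‖ := by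
      have := norm_add_le (x - x₀) x₀; simpa using this
    rw [hRdef]; linarith
  set C₁ : ℝ := ‖f' x₀‖ + ℓ with hC₁def
  clear_value C₁
  have hC₁0 : 0 ≤ C₁ := by rw [hC₁def]; positivity
  have hC₁ : ∀ x ∈ Metric.closedBall x₀ 1, ‖f' x‖ ≤ C₁ := by
    intro x hx
    have h1 : dist (f' x) (f' x₀) ≤ ℓ * dist x x₀ := by rw [hℓdef]; exact hlip.dist_le_mul x x₀
    have h2 : dist x x₀ ≤ 1 := hx
    have h3 : ℓ * dist x x₀ ≤ ℓ := by
      have := mul_le_mul_of_nonneg_left h2 hℓ0; linarith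
    have h4 : ‖f' x‖ ≤ ‖f' x - f' x₀‖ + ‖f' x₀‖ := by
      have := norm_add_le (f' x - f' x₀) (f' x₀); simpa using this
    rw [dist_eq_norm] at h1
    rw [hC₁def]; linarith
  have hfL : ∀ x ∈ Metric.closedBall x₀ 1, ∀ y ∈ Metric.closedBall x₀ 1,
      ‖f y - f x‖ ≤ C₁ * ‖y - x‖ := by
    intro x hx y hy
    refine Convex.norm_image_sub_le_of_norm_hasFDerivWithin_le
      (f' := fun u => InnerProductSpace.toDual ℝ _ (f' u))
      (fun u _ => ((hgrad u).hasFDerivAt).hasFDerivWithinAt) ?_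
      (convex_closedBall x₀ 1) hx hy
    intro u hu
    rw [(InnerProductSpace.toDual ℝ _).norm_map]
    exact hC₁ u hu
  set C₀ : ℝ := |f x₀| + C₁ with hC₀def
  clear_value C₀
  have hC₀ : ∀ x ∈ Metric.closedBall x₀ 1, |f x| ≤ C₀ := by
    intro x hx
    have h1 := hfL x₀ (Metric.mem_closedBall_self zero_le_one) x hx
    have hx1 : ‖x - x₀‖ ≤ 1 := by rwa [Metric.mem_closedBall, dist_eq_norm] at hx
    rw [Real.norm_eq_abs] at h1
    have h2 := abs_sub_abs_le_abs_sub (f x) (f x₀)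
    have h3 : C₁ * ‖x - x₀‖ ≤ C₁ := by
      have := mul_le_mul_of_nonneg_left hx1 hC₁0; linarith
    rw [hC₀def]; linarith
  set U : ℝ := C₀ + C₁*(‖z₀‖+R) + (‖z₀‖+R)^2/(2*γ) + r₀ with hUdef
  clear_value U
  have hU : ∀ x ∈ Metric.closedBall x₀ 1, F x ≤ U := by
    intro x hx
    have h := hFub x z₀ r₀ hgz₀
    have h1 : ‖z₀ - x‖ ≤ ‖z₀‖ + R := by
      have := norm_sub_le z₀ x
      have := hR x hx
      linarith
    have h2 : (inner ℝ (f' x) (z₀ - x) : ℝ) ≤ C₁ * (‖z₀‖ + R) := by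
      calc (inner ℝ (f' x) (z₀ - x) : ℝ) ≤ ‖f' x‖ * ‖z₀ - x‖ := real_inner_le_norm _ _
        _ ≤ C₁ * (‖z₀‖ + R) := mul_le_mul (hC₁ x hx) h1 (norm_nonneg _) hC₁0
    have h3 : ‖z₀ - x‖^2/(2*γ) ≤ (‖z₀‖+R)^2/(2*γ) := by
      gcongr
    have h4 := hC₀ x hx
    have h5 : f x ≤ C₀ := le_of_abs_le h4
    simp only [hQdef] at h
    rw [hUdef]; linarith
  set B : ℝ := C₁ + R/γ' with hBdef
  clear_value B
  have hB0 : 0 ≤ B := by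
    rw [hBdef]
    have : 0 ≤ R/γ' := div_nonneg hR0 hγ'0.le
    linarith
  set M : ℝ := max 0 (U + 1 + C₀ + R^2/(2*γ') - c) with hMdef
  clear_value M
  have hM0 : 0 ≤ M := by rw [hMdef]; exact le_max_left _ _
  set K : ℝ := max 1 ((M + B)/α) with hKdef
  clear_value K
  have hK1 : 1 ≤ K := by rw [hKdef]; exact le_max_left _ _
  have hKbound : ∀ x ∈ Metric.closedBall x₀ 1, ∀ z, ∀ r : ℝ, g z = (r : EReal) →
      Q x z + r ≤ F x + 1 → ‖z - x‖ ≤ K := by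
    intro x hx z r hgz hle
    have hcz := hcR z r hgz
    have hin : -(‖f' x‖ * ‖z - x‖) ≤ (inner ℝ (f' x) (z - x) : ℝ) := by
      have h1 := abs_real_inner_le_norm (f' x) (z - x)
      have h2 := neg_abs_le (inner ℝ (f' x) (z - x) : ℝ)
      linarith
    have hzn : ‖z‖ ≤ ‖z - x‖ + R := by
      have h1 := norm_add_le (z - x) x
      have h2 := hR x hx
      have h3 : ‖z‖ ≤ ‖z - x‖ + ‖x‖ := by simpa using h1
      linarith
    have hz2 : ‖z‖^2/(2*γ') ≤ (‖z - x‖ + R)^2/(2*γ') := by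
      gcongr
    have hid : ‖z - x‖^2/(2*γ) = α*‖z - x‖^2 + ‖z - x‖^2/(2*γ') := by
      rw [hαdef]; field_simp; ring
    have hid2 : (‖z - x‖ + R)^2/(2*γ') = ‖z - x‖^2/(2*γ') + (R/γ')*‖z - x‖ + R^2/(2*γ') := by
      field_simp; ring
    have hfx : -C₀ ≤ f x := by
      have := hC₀ x hx
      have := neg_abs_le (f x)
      linarith
    have hNs : ‖f' x‖ * ‖z - x‖ ≤ C₁ * ‖z - x‖ :=
      mul_le_mul_of_nonneg_right (hC₁ x hx) (norm_nonneg _)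
    have hUx := hU x hx
    have hq : α*‖z - x‖^2 - B*‖z - x‖ ≤ M := by
      simp only [hQdef] at hle
      have hBd : B*‖z - x‖ = C₁*‖z - x‖ + (R/γ')*‖z - x‖ := by rw [hBdef]; ring
      have hMd : U + 1 + C₀ + R^2/(2*γ') - c ≤ M := by rw [hMdef]; exact le_max_right _ _
      linarith [hcz, hin, hz2, hid, hid2, hfx, hNs, hUx, hBd, hMd, hle]
    have := aux_quad α B M ‖z - x‖ hα hM0 hB0 (norm_nonneg _) hq
    rw [hKdef]; exact this
  set L : ℝ := 2*C₁ + ℓ*(K+2) + (2*K+2)/(2*γ) with hLdef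
  clear_value L
  have hL0 : 0 ≤ L := by
    rw [hLdef]
    have h1 : 0 ≤ ℓ*(K+2) := mul_nonneg hℓ0 (by linarith)
    have h2 : 0 ≤ (2*K+2)/(2*γ) := div_nonneg (by linarith) (by linarith)
    linarith
  have main : ∀ x ∈ Metric.closedBall x₀ 1, ∀ y ∈ Metric.closedBall x₀ 1,
      F y ≤ F x + L * ‖y - x‖ := by
    intro x hx y hy
    have hd2 : ‖y - x‖ ≤ 2 := by
      have h1 : ‖y - x₀‖ ≤ 1 := by rwa [Metric.mem_closedBall, dist_eq_norm] at hy
      have h2 : ‖x - x₀‖ ≤ 1 := by rwa [Metric.mem_closedBall, dist_eq_norm] at hx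
      calc ‖y - x‖ = ‖(y - x₀) - (x - x₀)‖ := by rw [show y - x = (y - x₀) - (x - x₀) by abel]
        _ ≤ ‖y - x₀‖ + ‖x - x₀‖ := norm_sub_le _ _
        _ ≤ 2 := by linarith
    refine le_of_forall_pos_le_add ?_
    intro ε hε
    set ε' : ℝ := min ε 1 with hε'def
    clear_value ε'
    have hε'0 : 0 < ε' := by rw [hε'def]; exact lt_min hε one_pos
    have hε'1 : ε' ≤ 1 := by rw [hε'def]; exact min_le_right _ _
    have hε'ε : ε' ≤ ε := by rw [hε'def]; exact min_le_left _ _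
    obtain ⟨z, r, hgz, hzlt⟩ := hnear x ε' hε'0
    have hsK : ‖z - x‖ ≤ K := hKbound x hx z r hgz (by linarith)
    have hFy := hFub y z r hgz
    have hzy : ‖z - y‖ ≤ K + 2 := by
      have h1 : ‖z - y‖ ≤ ‖z - x‖ + ‖x - y‖ := by
        calc ‖z - y‖ = ‖(z - x) + (x - y)‖ := by rw [show z - y = (z - x) + (x - y) by abel]
          _ ≤ ‖z - x‖ + ‖x - y‖ := norm_add_le _ _
      have h2 : ‖x - y‖ = ‖y - x‖ := norm_sub_rev _ _
      linarith
    have e1 : f y - f x ≤ C₁ * ‖y - x‖ := by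
      have := hfL x hx y hy
      rw [Real.norm_eq_abs] at this
      exact le_of_abs_le this
    have e2 : (inner ℝ (f' y) (z - y) : ℝ) - (inner ℝ (f' x) (z - x) : ℝ) ≤
        ℓ*(K+2)*‖y - x‖ + C₁*‖y - x‖ := by
      have ha : (inner ℝ (f' y) (z - y) : ℝ) - (inner ℝ (f' x) (z - x) : ℝ)
          = (inner ℝ (f' y - f' x) (z - y) : ℝ) + (inner ℝ (f' x) (x - y) : ℝ) := by
        simp only [inner_sub_left, inner_sub_right]
        ring
      have hb : (inner ℝ (f' y - f' x) (z - y) : ℝ) ≤ (ℓ*‖y - x‖) * (K + 2) := by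
        have h1 : (inner ℝ (f' y - f' x) (z - y) : ℝ) ≤ ‖f' y - f' x‖ * ‖z - y‖ :=
          real_inner_le_norm _ _
        have h2 : ‖f' y - f' x‖ ≤ ℓ * ‖y - x‖ := by
          rw [hℓdef]
          have := hlip.dist_le_mul y x
          rw [dist_eq_norm, dist_eq_norm] at this
          exact this
        calc (inner ℝ (f' y - f' x) (z - y) : ℝ) ≤ ‖f' y - f' x‖ * ‖z - y‖ := h1
          _ ≤ (ℓ * ‖y - x‖) * (K + 2) :=
            mul_le_mul h2 hzy (norm_nonneg _) (by positivity)
      have hcc : (inner ℝ (f' x) (x - y) : ℝ) ≤ C₁ * ‖y - x‖ := by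
        have h1 : (inner ℝ (f' x) (x - y) : ℝ) ≤ ‖f' x‖ * ‖x - y‖ := real_inner_le_norm _ _
        have h2 : ‖x - y‖ = ‖y - x‖ := norm_sub_rev _ _
        have h3 : ‖f' x‖ * ‖y - x‖ ≤ C₁ * ‖y - x‖ :=
          mul_le_mul_of_nonneg_right (hC₁ x hx) (norm_nonneg _)
        rw [h2] at h1
        linarith
      have : ℓ*‖y - x‖*(K+2) = ℓ*(K+2)*‖y - x‖ := by ring
      linarith
    have e3 : ‖z - y‖^2/(2*γ) - ‖z - x‖^2/(2*γ) ≤ (2*K+2)*‖y - x‖/(2*γ) := by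
      have h1 : ‖z - y‖^2 - ‖z - x‖^2 ≤ (2*K+2)*‖y - x‖ := by
        have h2 : ‖z - y‖ ≤ ‖z - x‖ + ‖y - x‖ := by
          have h3 : ‖z - y‖ = ‖(z - x) + (x - y)‖ := by rw [show z - y = (z - x) + (x - y) by abel]
          have h4 : ‖x - y‖ = ‖y - x‖ := norm_sub_rev _ _
          rw [h3]
          calc ‖(z - x) + (x - y)‖ ≤ ‖z - x‖ + ‖x - y‖ := norm_add_le _ _
            _ = ‖z - x‖ + ‖y - x‖ := by rw [h4]
        nlinarith [norm_nonneg (z - y), norm_nonneg (z - x), norm_nonneg (y - x)]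
      have h5 : (‖z - y‖^2 - ‖z - x‖^2)/(2*γ) ≤ ((2*K+2)*‖y - x‖)/(2*γ) := by
        gcongr
      rw [sub_div] at h5
      exact h5
    have heq : Q y z = Q x z + (f y - f x)
        + ((inner ℝ (f' y) (z - y) : ℝ) - (inner ℝ (f' x) (z - x) : ℝ))
        + (‖z - y‖^2/(2*γ) - ‖z - x‖^2/(2*γ)) := by
      simp only [hQdef]; ring
    have hLe : L * ‖y - x‖ = C₁*‖y - x‖ + (ℓ*(K+2)*‖y - x‖ + C₁*‖y - x‖)
        + (2*K+2)*‖y - x‖/(2*γ) := by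
      rw [hLdef]; ring
    linarith [hFy, hzlt, e1, e2, e3, heq, hLe, hε'ε]
  refine ⟨Real.toNNReal L, Metric.closedBall x₀ 1, Metric.closedBall_mem_nhds x₀ one_pos, ?_⟩
  rw [lipschitzOnWith_iff_dist_le_mul]
  intro x hx y hy
  rw [Real.coe_toNNReal L hL0, Real.dist_eq, dist_eq_norm]
  have h1 := main x hx y hy
  have h2 := main y hy x hx
  have h3 : ‖y - x‖ = ‖x - y‖ := norm_sub_rev _ _
  rw [h3] at h1
  rw [abs_sub_le_iff]
  constructor <;> linarith


theorem stmt16 {n : ℕ} (f : EuclideanSpace ℝ (Fin n) → ℝ)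
    (f' : EuclideanSpace ℝ (Fin n) → EuclideanSpace ℝ (Fin n))
    (hgrad : ∀ x, HasGradientAt f (f' x) x)
    (Lf : ℝ) (hlip : LipschitzWith (Real.toNNReal Lf) f')
    (g : EuclideanSpace ℝ (Fin n) → EReal)
    (hproper : ProperFn g) (hlsc : LowerSemicontinuous g)
    (γg : ℝ) (hpb : ∀ γ' ∈ Set.Ioo (0 : ℝ) γg, ProxBddBelow g γ')
    (γ : ℝ) (hγ : γ ∈ Set.Ioo (0 : ℝ) γg) :
    ∃ F : EuclideanSpace ℝ (Fin n) → ℝ,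
      (∀ x, fbe f f' g γ x = ((F x : ℝ) : EReal)) ∧ LocallyLipschitz F := by
  exact stmt16' f f' hgrad Lf hlip g hproper hlsc γg hpb γ hγ
end

section
/- (Square-summable residuals) In the ZeroFPR iteration, where x^{k+1} = x̄^k + τ_k d^k satisfies φ_γ(x^{k+1}) ≤ Φ̄_k − σ‖r^k‖², Φ̄_{k+1} = (1−p_k)Φ̄_k + p_k φ_γ(x^{k+1}) with p_k ∈ [p_min, 1], r^k = (x^k − x̄^k)/γ and x̄^k ∈ T_γ(x^k), one has Σ_{k≥0} ‖r^k‖² ≤ (Φ̄_0 − inf φ)/(σ p_min); in particular r^k → 0. -/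
open Set Filter Topology

open intervalIntegral in
lemma descent {E : Type*} [NormedAddCommGroup E] [InnerProductSpace ℝ E] [CompleteSpace E]
    (f : E → ℝ) (f' : E → E) (hgrad : ∀ x, HasGradientAt f (f' x) x)
    (L : ℝ) (hL : 0 ≤ L) (hlip : LipschitzWith (Real.toNNReal L) f') (x y : E) :
    f y ≤ f x + inner ℝ (f' x) (y - x) + L / 2 * ‖y - x‖ ^ 2 := by
  set v := y - x with hv
  set φ' : ℝ → ℝ := fun t => inner ℝ (f' (x + t • v)) v with hφ'
  have hline : ∀ t : ℝ, HasDerivAt (fun s : ℝ => x + s • v) v t := by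
    intro t
    simpa using ((hasDerivAt_id t).smul_const v).const_add x
  have hderiv : ∀ t : ℝ, HasDerivAt (fun s : ℝ => f (x + s • v)) (φ' t) t := by
    intro t
    have h1 := (hgrad (x + t • v)).hasFDerivAt
    have := h1.comp_hasDerivAt t (hline t)
    simpa [hφ', Function.comp_def] using this
  have hcontf' : Continuous f' := hlip.continuous
  have hcont : Continuous φ' := by
    apply Continuous.inner (by fun_prop) continuous_const
  have hint : f (x + (1:ℝ) • v) - f (x + (0:ℝ) • v)
      = ∫ t in (0:ℝ)..1, φ' t := by
    rw [intervalIntegral.integral_eq_sub_of_hasDerivAt (fun t _ => hderiv t)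
      (hcont.intervalIntegrable 0 1)]
  have hbound : ∀ t ∈ Set.Icc (0:ℝ) 1, φ' t ≤ inner ℝ (f' x) v + L * t * ‖v‖ ^ 2 := by
    intro t ht
    have h2 : (inner ℝ (f' (x + t • v) - f' x) v : ℝ) ≤ ‖f' (x + t • v) - f' x‖ * ‖v‖ :=
      real_inner_le_norm _ _
    have h3 : ‖f' (x + t • v) - f' x‖ ≤ L * (t * ‖v‖) := by
      have hd := hlip.dist_le_mul (x + t • v) x
      calc ‖f' (x + t • v) - f' x‖ = dist (f' (x + t • v)) (f' x) := (dist_eq_norm _ _).symm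
        _ ≤ L.toNNReal * dist (x + t • v) x := hd
        _ = L * ‖t • v‖ := by
            rw [dist_eq_norm]; simp [Real.coe_toNNReal L hL]
        _ = L * (|t| * ‖v‖) := by rw [norm_smul]; simp
        _ = L * (t * ‖v‖) := by rw [abs_of_nonneg ht.1]
    have h1 : φ' t - (inner ℝ (f' x) v : ℝ) = (inner ℝ (f' (x + t • v) - f' x) v : ℝ) := by
      rw [inner_sub_left]
    nlinarith [norm_nonneg v, mul_le_mul_of_nonneg_right h3 (norm_nonneg v)]
  have hmono : ∫ t in (0:ℝ)..1, φ' t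
      ≤ ∫ t in (0:ℝ)..1, ((inner ℝ (f' x) v : ℝ) + L * t * ‖v‖ ^ 2) := by
    apply intervalIntegral.integral_mono_on zero_le_one
      (hcont.intervalIntegrable 0 1) (by apply Continuous.intervalIntegrable; fun_prop)
    exact hbound
  have hval : ∫ t in (0:ℝ)..1, ((inner ℝ (f' x) v : ℝ) + L * t * ‖v‖ ^ 2)
      = inner ℝ (f' x) v + L / 2 * ‖v‖ ^ 2 := by
    have h1 : IntervalIntegrable (fun _ : ℝ => (inner ℝ (f' x) v : ℝ)) MeasureTheory.volume 0 1 :=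
      intervalIntegrable_const
    have h2 : IntervalIntegrable (fun t : ℝ => L * t * ‖v‖ ^ 2) MeasureTheory.volume 0 1 := by
      apply Continuous.intervalIntegrable; fun_prop
    rw [intervalIntegral.integral_add h1 h2, intervalIntegral.integral_const]
    have h4 : ∫ t in (0:ℝ)..1, L * t * ‖v‖ ^ 2 = L / 2 * ‖v‖ ^ 2 := by
      have h3 : (fun t : ℝ => L * t * ‖v‖ ^ 2) = fun t : ℝ => t * (L * ‖v‖ ^ 2) := by
        funext t; ring
      rw [h3, intervalIntegral.integral_mul_const, integral_id]; ring
    rw [h4]; simp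
  have : f y - f x ≤ inner ℝ (f' x) v + L / 2 * ‖v‖ ^ 2 := by
    have h5 := hint
    simp only [one_smul, zero_smul, add_zero, hv, add_sub_cancel] at h5
    rw [h5]
    exact hmono.trans (le_of_eq hval)
  linarith

lemma fbe_lower {n : ℕ} (f : EuclideanSpace ℝ (Fin n) → ℝ)
    (f' : EuclideanSpace ℝ (Fin n) → EuclideanSpace ℝ (Fin n))
    (hgrad : ∀ x, HasGradientAt f (f' x) x)
    (Lf : ℝ) (hLf : 0 < Lf) (hlip : LipschitzWith (Real.toNNReal Lf) f')
    (g : EuclideanSpace ℝ (Fin n) → EReal) (γ : ℝ) (hγ0 : 0 < γ) (hγL : γ < 1 / Lf)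
    (m : ℝ) (hm : ∀ z, (m : EReal) ≤ ((f z : ℝ) : EReal) + g z)
    (y : EuclideanSpace ℝ (Fin n)) :
    (m : EReal) ≤ fbe f f' g γ y := by
  refine le_iInf fun z => ?_
  have hdesc := descent f f' hgrad Lf hLf.le hlip y z
  have hLγ : Lf < 1 / γ := by
    rw [lt_div_iff₀ hγ0]
    have := (lt_div_iff₀ hLf).mp hγL
    linarith [mul_comm Lf γ]
  have hreal : f z ≤ f y + (inner ℝ (f' y) (z - y) : ℝ) + ‖z - y‖ ^ 2 / (2 * γ) := by
    have hs : (0:ℝ) ≤ ‖z - y‖ ^ 2 := sq_nonneg _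
    have : Lf / 2 * ‖z - y‖ ^ 2 ≤ ‖z - y‖ ^ 2 / (2 * γ) := by
      rw [div_mul_eq_mul_div, le_div_iff₀ (by positivity)]
      have h2 : Lf * γ < 1 := (lt_div_iff₀ hγ0).mp hLγ
      nlinarith
    linarith
  calc (m : EReal) ≤ ((f z : ℝ) : EReal) + g z := hm z
    _ ≤ ((f y + (inner ℝ (f' y) (z - y) : ℝ) + ‖z - y‖ ^ 2 / (2 * γ) : ℝ) : EReal) + g z := by
        exact add_le_add (EReal.coe_le_coe_iff.mpr hreal) le_rfl
    _ = linQ f f' g γ y z := rfl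


theorem stmt18 {n : ℕ} (f : EuclideanSpace ℝ (Fin n) → ℝ)
    (f' : EuclideanSpace ℝ (Fin n) → EuclideanSpace ℝ (Fin n))
    (hgrad : ∀ x, HasGradientAt f (f' x) x)
    (Lf : ℝ) (hLf : 0 < Lf) (hlip : LipschitzWith (Real.toNNReal Lf) f')
    (g : EuclideanSpace ℝ (Fin n) → EReal)
    (hproper : ProperFn g) (hlsc : LowerSemicontinuous g)
    (γg : ℝ) (hpb : ∀ γ' ∈ Set.Ioo (0 : ℝ) γg, ProxBddBelow g γ')
    (γ : ℝ) (hγ : γ ∈ Set.Ioo (0 : ℝ) (min (1 / Lf) γg))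
    (σ : ℝ) (hσ : 0 < σ) (pmin : ℝ) (hpmin : 0 < pmin)
    (F : EuclideanSpace ℝ (Fin n) → ℝ)
    (hF : ∀ y, fbe f f' g γ y = ((F y : ℝ) : EReal))
    (m : ℝ) (hm : ∀ z, (m : EReal) ≤ ((f z : ℝ) : EReal) + g z)
    (x xb d r : ℕ → EuclideanSpace ℝ (Fin n)) (τ p Φ : ℕ → ℝ)
    (hxb : ∀ k, xb k ∈ Tset f f' g γ (x k))
    (hr : ∀ k, r k = γ⁻¹ • (x k - xb k))
    (hstep : ∀ k, x (k + 1) = xb k + τ k • d k)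
    (hLS : ∀ k, F (x (k + 1)) ≤ Φ k - σ * ‖r k‖ ^ 2)
    (hΦ0 : Φ 0 = F (x 0))
    (hΦ : ∀ k, Φ (k + 1) = (1 - p k) * Φ k + p k * F (x (k + 1)))
    (hp : ∀ k, p k ∈ Set.Icc pmin 1) :
    Summable (fun k => ‖r k‖ ^ 2) ∧
      (∑' k, ‖r k‖ ^ 2) ≤ (Φ 0 - m) / (σ * pmin) ∧
      Filter.Tendsto r Filter.atTop (nhds 0) := by
  obtain ⟨hγ0, hγlt⟩ := hγ
  have hγL : γ < 1 / Lf := lt_of_lt_of_le hγlt (min_le_left _ _)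
  have hFm : ∀ y, m ≤ F y := by
    intro y
    have h := fbe_lower f f' hgrad Lf hLf hlip g γ hγ0 hγL m hm y
    rw [hF y] at h
    exact_mod_cast h
  have hΦF : ∀ k, F (x k) ≤ Φ k := by
    intro k
    induction k with
    | zero => rw [hΦ0]
    | succ k ih =>
      have h1 := hLS k
      have hpk := hp k
      have hrk : 0 ≤ ‖r k‖ ^ 2 := sq_nonneg _
      rw [hΦ k]
      have hgap : (0:ℝ) ≤ Φ k - F (x (k + 1)) := by nlinarith [mul_nonneg hσ.le hrk]
      nlinarith [mul_nonneg (sub_nonneg.mpr hpk.2) hgap]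
  have hΦm : ∀ k, m ≤ Φ k := fun k => (hFm (x k)).trans (hΦF k)
  have key : ∀ k, σ * pmin * ‖r k‖ ^ 2 ≤ Φ k - Φ (k + 1) := by
    intro k
    have h1 := hLS k
    have hpk := hp k
    have hrk : 0 ≤ ‖r k‖ ^ 2 := sq_nonneg _
    rw [hΦ k]
    have hA : σ * ‖r k‖ ^ 2 ≤ Φ k - F (x (k + 1)) := by linarith
    have hB : pmin * (σ * ‖r k‖ ^ 2) ≤ p k * (Φ k - F (x (k + 1))) :=
      mul_le_mul hpk.1 hA (by positivity) (hpmin.le.trans hpk.1)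
    nlinarith [hB]
  have hpart : ∀ N, ∑ k ∈ Finset.range N, σ * pmin * ‖r k‖ ^ 2 ≤ Φ 0 - m := by
    intro N
    calc ∑ k ∈ Finset.range N, σ * pmin * ‖r k‖ ^ 2
        ≤ ∑ k ∈ Finset.range N, (Φ k - Φ (k + 1)) :=
          Finset.sum_le_sum (fun k _ => key k)
      _ = Φ 0 - Φ N := Finset.sum_range_sub' Φ N
      _ ≤ Φ 0 - m := by linarith [hΦm N]
  have hσp : 0 < σ * pmin := mul_pos hσ hpmin
  have hpart2 : ∀ N, ∑ k ∈ Finset.range N, ‖r k‖ ^ 2 ≤ (Φ 0 - m) / (σ * pmin) := by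
    intro N
    rw [le_div_iff₀ hσp]
    calc (∑ k ∈ Finset.range N, ‖r k‖ ^ 2) * (σ * pmin)
        = ∑ k ∈ Finset.range N, σ * pmin * ‖r k‖ ^ 2 := by
          rw [Finset.sum_mul]; exact Finset.sum_congr rfl (fun k _ => by ring)
      _ ≤ Φ 0 - m := hpart N
  have hsum : Summable (fun k => ‖r k‖ ^ 2) :=
    summable_of_sum_range_le (fun k => sq_nonneg _) hpart2
  refine ⟨hsum, Summable.tsum_le_of_sum_range_le hsum hpart2, ?_⟩
  have h0 : Filter.Tendsto (fun k => ‖r k‖ ^ 2) Filter.atTop (nhds 0) :=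
    hsum.tendsto_atTop_zero
  have h1 : Filter.Tendsto (fun k => ‖r k‖) Filter.atTop (nhds 0) := by
    have h2 := (Real.continuous_sqrt.tendsto 0).comp h0
    simp only [Function.comp_def, Real.sqrt_zero] at h2
    convert h2 using 2 with k
    rw [Real.sqrt_sq (norm_nonneg _)]
  exact tendsto_zero_iff_norm_tendsto_zero.mpr h1
end

section
/- If x^k → x′ along a subsequence, the corresponding residuals r^k = (x^k − x̄^k)/γ with x̄^k ∈ T_γ(x^k) converge to 0, and ∇f is continuous, then x′ is a fixed point of T_γ (i.e., x′ ∈ T_γ(x′)), by outer semicontinuity of the proximal mapping prox_{γg}. -/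
open Set Filter Topology

theorem stmt19 {n : ℕ} (f : EuclideanSpace ℝ (Fin n) → ℝ)
    (f' : EuclideanSpace ℝ (Fin n) → EuclideanSpace ℝ (Fin n))
    (hgrad : ∀ x, HasGradientAt f (f' x) x)
    (Lf : ℝ) (hLf : 0 < Lf) (hlip : LipschitzWith (Real.toNNReal Lf) f')
    (g : EuclideanSpace ℝ (Fin n) → EReal)
    (hproper : ProperFn g) (hlsc : LowerSemicontinuous g)
    (γg : ℝ) (hpb : ∀ γ' ∈ Set.Ioo (0 : ℝ) γg, ProxBddBelow g γ')
    (γ : ℝ) (hγ : γ ∈ Set.Ioo (0 : ℝ) (min (1 / Lf) γg))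
    (x xb r : ℕ → EuclideanSpace ℝ (Fin n))
    (hxb : ∀ k, xb k ∈ Tset f f' g γ (x k))
    (hr : ∀ k, r k = γ⁻¹ • (x k - xb k))
    (φ : ℕ → ℕ) (hφ : StrictMono φ)
    (x' : EuclideanSpace ℝ (Fin n))
    (hconv : Filter.Tendsto (fun k => x (φ k)) Filter.atTop (nhds x'))
    (hres : Filter.Tendsto (fun k => r (φ k)) Filter.atTop (nhds 0)) :
    x' ∈ Tset f f' g γ x' := by
  obtain ⟨hγ0, hγm⟩ := hγ
  have hγne : (γ : ℝ) ≠ 0 := ne_of_gt hγ0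
  -- the real part of linQ
  set Q : EuclideanSpace ℝ (Fin n) → EuclideanSpace ℝ (Fin n) → ℝ :=
    fun a z => f a + (inner ℝ (f' a) (z - a) : ℝ) + ‖z - a‖ ^ 2 / (2 * γ) with hQdef
  have hlinQ : ∀ a z, linQ f f' g γ a z = ((Q a z : ℝ) : EReal) + g z := fun a z => rfl
  have hQself : ∀ a, Q a a = f a := by
    intro a; simp [hQdef]
  -- f and f' continuous
  have hfc : Continuous f := by
    rw [continuous_iff_continuousAt]
    exact fun a => (hgrad a).hasFDerivAt.continuousAt
  have hf'c : Continuous f' := hlip.continuous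
  have hQcont : Continuous (fun p : EuclideanSpace ℝ (Fin n) × EuclideanSpace ℝ (Fin n) => Q p.1 p.2) := by
    apply Continuous.add
    · apply Continuous.add
      · exact hfc.comp continuous_fst
      · exact (hf'c.comp continuous_fst).inner (continuous_snd.sub continuous_fst)
    · exact ((continuous_snd.sub continuous_fst).norm.pow 2).div_const _
  -- xb (φ k) → x'
  have hzb : ∀ k, xb k = x k - γ • r k := by
    intro k
    rw [hr k, smul_smul, mul_inv_cancel₀ hγne, one_smul]
    abel
  have hz : Tendsto (fun k => xb (φ k)) atTop (nhds x') := by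
    have h1 : Tendsto (fun k => x (φ k) - γ • r (φ k)) atTop (nhds (x' - γ • (0 : EuclideanSpace ℝ (Fin n)))) :=
      hconv.sub (hres.const_smul γ)
    simpa [hzb] using h1
  intro w
  rw [hlinQ, hlinQ, hQself]
  by_contra hcon
  push_neg at hcon
  -- g w is not ⊤
  rcases eq_or_ne (g w) ⊤ with hgw | hgw
  · rw [hgw] at hcon
    simp [EReal.add_top_iff_ne_bot] at hcon
  have hgw' : g w ≠ ⊥ := hproper.2 w
  set b : ℝ := (g w).toReal with hb
  have hgwb : g w = ((b : ℝ) : EReal) := (EReal.coe_toReal hgw hgw').symm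
  rw [hgwb, ← EReal.coe_add] at hcon
  -- pick y strictly between Q x' w + b - f x' and g x'
  have hgx' : ((Q x' w + b - f x' : ℝ) : EReal) < g x' := by
    rcases eq_or_ne (g x') ⊤ with h | h
    · rw [h]; exact EReal.coe_lt_top _
    · have h' : g x' ≠ ⊥ := hproper.2 x'
      rw [← EReal.coe_toReal h h'] at hcon ⊢
      rw [← EReal.coe_add, EReal.coe_lt_coe_iff] at hcon
      rw [EReal.coe_lt_coe_iff]
      linarith
  obtain ⟨y, hy1, hy2⟩ : ∃ y : ℝ, Q x' w + b - f x' < y ∧ ((y : ℝ) : EReal) < g x' := by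
    rcases eq_or_ne (g x') ⊤ with h | h
    · exact ⟨Q x' w + b - f x' + 1, by linarith, by rw [h]; exact EReal.coe_lt_top _⟩
    · have h' : g x' ≠ ⊥ := hproper.2 x'
      rw [← EReal.coe_toReal h h', EReal.coe_lt_coe_iff] at hgx'
      obtain ⟨y, hy1, hy2⟩ := exists_between hgx'
      exact ⟨y, hy1, by rw [← EReal.coe_toReal h h']; exact_mod_cast hy2⟩
  -- eventually y < g (xb (φ k))
  have hev : ∀ᶠ k in atTop, ((y : ℝ) : EReal) < g (xb (φ k)) :=
    hz.eventually (hlsc x' y hy2)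
  -- per-k inequality
  have hkey : ∀ k, ((y : ℝ) : EReal) < g (xb (φ k)) →
      y < Q (x (φ k)) w + b - Q (x (φ k)) (xb (φ k)) := by
    intro k hyk
    have hmin := hxb (φ k) w
    rw [hlinQ, hlinQ, hgwb, ← EReal.coe_add] at hmin
    have hzt : g (xb (φ k)) ≠ ⊤ := by
      intro h
      rw [h] at hmin
      have h1 : (((Q (x (φ k)) (xb (φ k))) : ℝ) : EReal) + ⊤ = ⊤ :=
        EReal.add_top_of_ne_bot (EReal.coe_ne_bot _)
      rw [h1, top_le_iff] at hmin
      exact EReal.coe_ne_top _ hmin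
    have hzb' : g (xb (φ k)) ≠ ⊥ := hproper.2 _
    rw [← EReal.coe_toReal hzt hzb'] at hmin hyk
    rw [← EReal.coe_add, EReal.coe_le_coe_iff] at hmin
    rw [EReal.coe_lt_coe_iff] at hyk
    linarith
  have hev2 : ∀ᶠ k in atTop, y ≤ Q (x (φ k)) w + b - Q (x (φ k)) (xb (φ k)) :=
    hev.mono fun k hk => le_of_lt (hkey k hk)
  -- take the limit
  have hlim : Tendsto (fun k => Q (x (φ k)) w + b - Q (x (φ k)) (xb (φ k))) atTop
      (nhds (Q x' w + b - Q x' x')) := by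
    have h1 : Tendsto (fun k => Q (x (φ k)) w) atTop (nhds (Q x' w)) :=
      (hQcont.tendsto (x', w)).comp (hconv.prodMk_nhds tendsto_const_nhds)
    have h2 : Tendsto (fun k => Q (x (φ k)) (xb (φ k))) atTop (nhds (Q x' x')) :=
      (hQcont.tendsto (x', x')).comp (hconv.prodMk_nhds hz)
    exact (h1.add_const b).sub h2
  have := ge_of_tendsto hlim hev2
  rw [hQself] at this
  linarith
end
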